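/- If (g_k)_{k∈K} is a Bessel sequence in H₁ with bound B and (f_i)_{i∈I} is a Bessel sequence in H₂ with bound B', then the family (f_i ⊗ ḡ_k)_{(i,k)∈I×K} is a Bessel sequence in the Hilbert space HS(H₁, H₂) with bound B·B', i.e. Σ_{i,k} |⟨T, f_i ⊗ ḡ_k⟩_HS|² ≤ B·B'·‖T‖_HS² for all T ∈ HS(H₁, H₂). -/

import Mathlib

open scoped InnerProductSpace

/-- The rank-one operator `f ⊗ ḡ : h ↦ ⟨h,g⟩ f` (paper convention), i.e. `h ↦ ⟪g, h⟫_ℂ • f`. -/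
noncomputable def rankOne {H₁ H₂ : Type*} [NormedAddCommGroup H₁] [InnerProductSpace ℂ H₁]
    [NormedAddCommGroup H₂] [InnerProductSpace ℂ H₂] (f : H₂) (g : H₁) : H₁ →L[ℂ] H₂ :=
  (innerSL ℂ g).smulRight f

theorem hb_hasSum {H : Type*} [NormedAddCommGroup H] [InnerProductSpace ℂ H] {κ : Type*}
    (b : HilbertBasis κ ℂ H) (x : H) :
    HasSum (fun j => ‖⟪b j, x⟫_ℂ‖ ^ 2) (‖x‖ ^ 2) := by
  have h := (b.hasSum_inner_mul_inner x x).mapL Complex.reCLM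
  convert h using 1
  · funext j
    rw [← inner_conj_symm x (b j)]
    simp only [Complex.reCLM_apply, ← Complex.normSq_eq_conj_mul_self, Complex.ofReal_re,
      Complex.normSq_eq_norm_sq]
  · rw [Complex.reCLM_apply, inner_self_eq_norm_sq_to_K]
    norm_cast

theorem tsum_rankOne_inner {H₁ H₂ : Type*} [NormedAddCommGroup H₁] [InnerProductSpace ℂ H₁]
    [CompleteSpace H₁] [NormedAddCommGroup H₂] [InnerProductSpace ℂ H₂] [CompleteSpace H₂]
    {ι : Type*} (e : HilbertBasis ι ℂ H₁) (f : H₂) (g : H₁) (T : H₁ →L[ℂ] H₂) :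
    ∑' j, ⟪(rankOne f g) (e j), T (e j)⟫_ℂ = ⟪f, T g⟫_ℂ := by
  have h : ∀ j, ⟪(rankOne f g) (e j), T (e j)⟫_ℂ
      = ⟪(ContinuousLinearMap.adjoint T) f, e j⟫_ℂ * ⟪e j, g⟫_ℂ := by
    intro j
    rw [rankOne]
    simp only [ContinuousLinearMap.smulRight_apply, innerSL_apply_apply, inner_smul_left,
      ContinuousLinearMap.adjoint_inner_left, inner_conj_symm]
    ring
  rw [tsum_congr h, e.tsum_inner_mul_inner, ContinuousLinearMap.adjoint_inner_left]

theorem claimB {H₁ H₂ : Type*} [NormedAddCommGroup H₁] [InnerProductSpace ℂ H₁] [CompleteSpace H₁]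
    [NormedAddCommGroup H₂] [InnerProductSpace ℂ H₂] [CompleteSpace H₂]
    {ι : Type*} (e : HilbertBasis ι ℂ H₁)
    (T : H₁ →L[ℂ] H₂) (hT : Summable fun j => ‖T (e j)‖ ^ 2)
    {m : ℕ} (z : Fin m → H₁) (hz : Orthonormal ℂ z) :
    ∑ t, ‖T (z t)‖ ^ 2 ≤ ∑' j, ‖T (e j)‖ ^ 2 := by
  obtain ⟨s, v, -⟩ := exists_hilbertBasis ℂ H₂
  set A := ContinuousLinearMap.adjoint T with hA
  have hrw : ∀ (j' : s) (x : H₁), ‖⟪v j', T x⟫_ℂ‖ = ‖⟪A (v j'), x⟫_ℂ‖ := by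
    intro j' x
    rw [ContinuousLinearMap.adjoint_inner_left]
  have hG : Summable (fun p : ι × s => ‖⟪v p.2, T (e p.1)⟫_ℂ‖ ^ 2) := by
    apply (summable_prod_of_nonneg (fun p => by positivity)).mpr
    exact ⟨fun j => (hb_hasSum v (T (e j))).summable,
      hT.congr fun j => ((hb_hasSum v (T (e j))).tsum_eq).symm⟩
  have hAv : ∀ j' : s, HasSum (fun j : ι => ‖⟪v j', T (e j)⟫_ℂ‖ ^ 2) (‖A (v j')‖ ^ 2) := by
    intro j'
    have h := hb_hasSum e (A (v j'))
    convert h using 2 with j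
    rw [hrw, norm_inner_symm]
  have hsumA : Summable (fun j' : s => ‖A (v j')‖ ^ 2) := by
    have h2 := ((summable_prod_of_nonneg (fun p => by positivity)).mp hG.prod_symm).2
    exact h2.congr fun j' => (hAv j').tsum_eq
  have htotal : ∑' j' : s, ‖A (v j')‖ ^ 2 = ∑' j, ‖T (e j)‖ ^ 2 := by
    calc ∑' j' : s, ‖A (v j')‖ ^ 2
        = ∑' (j' : s) (j : ι), ‖⟪v j', T (e j)⟫_ℂ‖ ^ 2 :=
          tsum_congr fun j' => ((hAv j').tsum_eq).symm
      _ = ∑' (j : ι) (j' : s), ‖⟪v j', T (e j)⟫_ℂ‖ ^ 2 := Summable.tsum_comm hG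
      _ = ∑' j, ‖T (e j)‖ ^ 2 := tsum_congr fun j => (hb_hasSum v (T (e j))).tsum_eq
  calc ∑ t, ‖T (z t)‖ ^ 2
      = ∑ t, ∑' j' : s, ‖⟪v j', T (z t)⟫_ℂ‖ ^ 2 :=
        Finset.sum_congr rfl fun t _ => ((hb_hasSum v (T (z t))).tsum_eq).symm
    _ = ∑' j' : s, ∑ t, ‖⟪v j', T (z t)⟫_ℂ‖ ^ 2 :=
        (Summable.tsum_finsetSum fun t _ => (hb_hasSum v (T (z t))).summable).symm
    _ ≤ ∑' j' : s, ‖A (v j')‖ ^ 2 := by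
        refine Summable.tsum_le_tsum (fun j' => ?_)
          (summable_sum fun t _ => (hb_hasSum v (T (z t))).summable) hsumA
        calc ∑ t, ‖⟪v j', T (z t)⟫_ℂ‖ ^ 2 = ∑ t, ‖⟪z t, A (v j')⟫_ℂ‖ ^ 2 := by
              refine Finset.sum_congr rfl fun t _ => ?_
              rw [hrw, norm_inner_symm]
          _ ≤ ‖A (v j')‖ ^ 2 := hz.sum_inner_products_le _
    _ = ∑' j, ‖T (e j)‖ ^ 2 := htotal

/-- If `(g k)` is a Bessel sequence in `H₁` with bound `B` and `(f i)` a Bessel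
sequence in `H₂` with bound `B'`, then `(f i ⊗ ḡ k)` is a Bessel sequence in `HS(H₁,H₂)` with
bound `B·B'`:  `Σ_{i,k} |⟨T, f_i ⊗ ḡ_k⟩_HS|² ≤ B·B'·‖T‖_HS²` for every Hilbert–Schmidt `T`.
The HS inner product and norm are computed via an orthonormal basis `(e j)` of `H₁`. -/
theorem tensor_bessel
    {H₁ H₂ : Type*} [NormedAddCommGroup H₁] [InnerProductSpace ℂ H₁] [CompleteSpace H₁]
    [NormedAddCommGroup H₂] [InnerProductSpace ℂ H₂] [CompleteSpace H₂]
    {ι I K : Type*} (e : HilbertBasis ι ℂ H₁)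
    (g : K → H₁) (f : I → H₂) (B B' : ℝ) (hB : 0 < B) (hB' : 0 < B')
    (hg : ∀ x : H₁, ∑' k, ‖⟪g k, x⟫_ℂ‖ ^ 2 ≤ B * ‖x‖ ^ 2)
    (hf : ∀ y : H₂, ∑' i, ‖⟪f i, y⟫_ℂ‖ ^ 2 ≤ B' * ‖y‖ ^ 2)
    (T : H₁ →L[ℂ] H₂) (hT : Summable fun j => ‖T (e j)‖ ^ 2) :
    ∑' p : I × K, ‖∑' j, ⟪(rankOne (f p.1) (g p.2)) (e j), T (e j)⟫_ℂ‖ ^ 2 ≤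
      B * B' * ∑' j, ‖T (e j)‖ ^ 2 := by
  classical
  set C := ∑' j, ‖T (e j)‖ ^ 2 with hC
  have hC0 : 0 ≤ C := tsum_nonneg fun _ => by positivity
  have hkey : ∀ p : I × K, ‖∑' j, ⟪(rankOne (f p.1) (g p.2)) (e j), T (e j)⟫_ℂ‖ ^ 2
      = ‖⟪f p.1, T (g p.2)⟫_ℂ‖ ^ 2 := fun p => by rw [tsum_rankOne_inner]
  rw [tsum_congr hkey]
  set F : I × K → ℝ := fun p => ‖⟪f p.1, T (g p.2)⟫_ℂ‖ ^ 2 with hFdef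
  by_cases hS : Summable F
  swap
  · rw [tsum_eq_zero_of_not_summable hS]
    exact mul_nonneg (by positivity) hC0
  set V : Submodule ℂ H₁ := (Submodule.span ℂ (Set.range g)).topologicalClosure with hV
  haveI : CompleteSpace V := (Submodule.isClosed_topologicalClosure _).completeSpace_coe
  set u : I → H₁ := fun i => ContinuousLinearMap.adjoint T (f i) with hu
  set w : I → H₁ := fun i => (V.orthogonalProjectionOnto (u i) : H₁) with hw
  have hwV : ∀ i, w i ∈ V := fun i => SetLike.coe_mem _
  have hgV : ∀ k, g k ∈ V := fun k =>
    (Submodule.le_topologicalClosure _) (Submodule.subset_span (Set.mem_range_self k))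
  have hinner_w : ∀ (i : I) (x : H₁), x ∈ V → ⟪x, u i⟫_ℂ = ⟪x, w i⟫_ℂ := by
    intro i x hx
    have h0 : ⟪u i - w i, x⟫_ℂ = 0 := Submodule.starProjection_inner_eq_zero (K := V) (u i) x hx
    rw [inner_sub_left, sub_eq_zero] at h0
    have := congrArg (starRingEnd ℂ) h0
    rwa [inner_conj_symm, inner_conj_symm] at this
  have hnorm_u : ∀ (i : I) (x : H₁), ‖⟪x, u i⟫_ℂ‖ = ‖⟪f i, T x⟫_ℂ‖ := by
    intro i x
    rw [norm_inner_symm, hu]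
    simp only [ContinuousLinearMap.adjoint_inner_left]
  have hFrw : ∀ (i : I) (k : K), F (i, k) = ‖⟪g k, w i⟫_ℂ‖ ^ 2 := by
    intro i k
    have : ‖⟪f i, T (g k)⟫_ℂ‖ = ‖⟪g k, w i⟫_ℂ‖ := by
      rw [← hnorm_u i (g k), hinner_w i (g k) (hgV k)]
    simp only [hFdef, this]
  -- summability on the span of the g's
  have hsumspan : ∀ x ∈ Submodule.span ℂ (Set.range g),
      Summable fun i => ‖⟪f i, T x⟫_ℂ‖ ^ 2 := by
    intro x hx
    induction hx using Submodule.span_induction with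
    | mem x hxs =>
      obtain ⟨k, rfl⟩ := hxs
      have := hS.prod_symm.prod_factor k
      exact this.congr fun i => rfl
    | zero => simpa using summable_zero
    | add x y hxm hym ihx ihy =>
      refine Summable.of_nonneg_of_le (fun i => by positivity) (fun i => ?_)
        ((ihx.mul_left 2).add (ihy.mul_left 2))
      rw [map_add, inner_add_right]
      have h1 := norm_add_le ⟪f i, T x⟫_ℂ ⟪f i, T y⟫_ℂ
      have h2 : (0:ℝ) ≤ ‖⟪f i, T x⟫_ℂ‖ := norm_nonneg _
      have h3 : (0:ℝ) ≤ ‖⟪f i, T y⟫_ℂ‖ := norm_nonneg _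
      have h4 : (0:ℝ) ≤ ‖⟪f i, T x⟫_ℂ + ⟪f i, T y⟫_ℂ‖ := norm_nonneg _
      nlinarith [sq_nonneg (‖⟪f i, T x⟫_ℂ‖ - ‖⟪f i, T y⟫_ℂ‖)]
    | smul a x hxm ih =>
      have : ∀ i : I, ‖⟪f i, T (a • x)⟫_ℂ‖ ^ 2 = ‖a‖ ^ 2 * ‖⟪f i, T x⟫_ℂ‖ ^ 2 := by
        intro i
        rw [map_smul, inner_smul_right, norm_mul, mul_pow]
      exact (ih.mul_left (‖a‖ ^ 2)).congr fun i => (this i).symm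
  have claimA : ∀ (A : Finset I), ∀ x ∈ V,
      ∑ i ∈ A, ‖⟪f i, T x⟫_ℂ‖ ^ 2 ≤ B' * ‖T x‖ ^ 2 := by
    intro A
    have hcl : IsClosed {x : H₁ | ∑ i ∈ A, ‖⟪f i, T x⟫_ℂ‖ ^ 2 ≤ B' * ‖T x‖ ^ 2} := by
      apply isClosed_le
      · apply continuous_finset_sum
        intro i _
        have : Continuous fun x : H₁ => ⟪f i, T x⟫_ℂ := (innerSL ℂ (f i)).continuous.comp T.continuous
        exact this.norm.pow 2
      · exact continuous_const.mul (T.continuous.norm.pow 2)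
    have hsub : (Submodule.span ℂ (Set.range g) : Set H₁) ⊆
        {x : H₁ | ∑ i ∈ A, ‖⟪f i, T x⟫_ℂ‖ ^ 2 ≤ B' * ‖T x‖ ^ 2} := fun x hx =>
      (Summable.sum_le_tsum A (fun i _ => by positivity) (hsumspan x hx)).trans (hf (T x))
    intro x hx
    have hVsub : (V : Set H₁) ⊆
        {x : H₁ | ∑ i ∈ A, ‖⟪f i, T x⟫_ℂ‖ ^ 2 ≤ B' * ‖T x‖ ^ 2} := by
      rw [hV, Submodule.topologicalClosure_coe]
      exact closure_minimal hsub hcl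
    exact hVsub hx
  refine Summable.tsum_le_of_sum_le hS ?_
  intro P
  set A := P.image Prod.fst with hAdef
  set S := P.image Prod.snd with hSdef
  have hPsub : P ⊆ A ×ˢ S := fun p hp =>
    Finset.mem_product.mpr ⟨Finset.mem_image_of_mem _ hp, Finset.mem_image_of_mem _ hp⟩
  -- the finite-dimensional space spanned by the projections
  set Z : Submodule ℂ H₁ := Submodule.span ℂ (w '' (A : Set I)) with hZ
  haveI : FiniteDimensional ℂ Z := FiniteDimensional.span_of_finite ℂ ((A.finite_toSet).image w)
  set b := stdOrthonormalBasis ℂ Z with hb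
  set z : Fin (Module.finrank ℂ Z) → H₁ := fun t => ((b t : Z) : H₁) with hz
  have hZV : Z ≤ V := Submodule.span_le.mpr (by rintro x ⟨i, _, rfl⟩; exact hwV i)
  have hzV : ∀ t, z t ∈ V := fun t => hZV (SetLike.coe_mem (b t))
  have hzon : Orthonormal ℂ z := by
    rw [orthonormal_iff_ite]
    intro t t'
    have := orthonormal_iff_ite.mp b.orthonormal t t'
    rwa [Submodule.coe_inner] at this
  have hwnorm : ∀ i ∈ A, ‖w i‖ ^ 2 = ∑ t, ‖⟪z t, w i⟫_ℂ‖ ^ 2 := by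
    intro i hi
    have hmem : w i ∈ Z := Submodule.subset_span ⟨i, hi, rfl⟩
    have h1 : ‖w i‖ = ‖(⟨w i, hmem⟩ : Z)‖ := rfl
    have h2 : ‖(⟨w i, hmem⟩ : Z)‖ = ‖b.repr ⟨w i, hmem⟩‖ := (b.repr.norm_map _).symm
    have h3 : ‖b.repr ⟨w i, hmem⟩‖ ^ 2 = ∑ t, ‖b.repr ⟨w i, hmem⟩ t‖ ^ 2 := by
      rw [EuclideanSpace.norm_eq, Real.sq_sqrt (by positivity)]
    rw [h1, h2, h3]
    refine Finset.sum_congr rfl fun t _ => ?_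
    rw [b.repr_apply_apply, Submodule.coe_inner]
  have hzw : ∀ (t : Fin (Module.finrank ℂ Z)) (i : I),
      ‖⟪z t, w i⟫_ℂ‖ = ‖⟪f i, T (z t)⟫_ℂ‖ := by
    intro t i
    rw [← hinner_w i (z t) (hzV t)]
    exact hnorm_u i (z t)
  have key2 : ∑ i ∈ A, ‖w i‖ ^ 2 ≤ B' * C := by
    calc ∑ i ∈ A, ‖w i‖ ^ 2 = ∑ i ∈ A, ∑ t, ‖⟪z t, w i⟫_ℂ‖ ^ 2 :=
          Finset.sum_congr rfl hwnorm
      _ = ∑ t, ∑ i ∈ A, ‖⟪z t, w i⟫_ℂ‖ ^ 2 := Finset.sum_comm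
      _ = ∑ t, ∑ i ∈ A, ‖⟪f i, T (z t)⟫_ℂ‖ ^ 2 :=
          Finset.sum_congr rfl fun t _ => Finset.sum_congr rfl fun i _ => by rw [hzw]
      _ ≤ ∑ t, B' * ‖T (z t)‖ ^ 2 :=
          Finset.sum_le_sum fun t _ => claimA A (z t) (hzV t)
      _ = B' * ∑ t, ‖T (z t)‖ ^ 2 := (Finset.mul_sum _ _ _).symm
      _ ≤ B' * C := mul_le_mul_of_nonneg_left (claimB e T hT z hzon) hB'.le
  have h2 : ∀ i ∈ A, ∑ k ∈ S, F (i, k) ≤ B * ‖w i‖ ^ 2 := by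
    intro i _
    have hsumm : Summable fun k => F (i, k) := hS.prod_factor i
    refine (Summable.sum_le_tsum S (fun k _ => by positivity) hsumm).trans ?_
    calc ∑' k, F (i, k) = ∑' k, ‖⟪g k, w i⟫_ℂ‖ ^ 2 := tsum_congr fun k => hFrw i k
      _ ≤ B * ‖w i‖ ^ 2 := hg (w i)
  calc ∑ p ∈ P, F p ≤ ∑ p ∈ A ×ˢ S, F p :=
        Finset.sum_le_sum_of_subset_of_nonneg hPsub fun p _ _ => by positivity
    _ = ∑ i ∈ A, ∑ k ∈ S, F (i, k) := Finset.sum_product _ _ _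
    _ ≤ ∑ i ∈ A, B * ‖w i‖ ^ 2 := Finset.sum_le_sum h2
    _ = B * ∑ i ∈ A, ‖w i‖ ^ 2 := (Finset.mul_sum _ _ _).symm
    _ ≤ B * (B' * C) := mul_le_mul_of_nonneg_left key2 hB.le
    _ = B * B' * C := (mul_assoc _ _ _).symm
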